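/- Let Cᵢ and Cⱼ be two disjoint maximal commuting Pauli classes in dimension d = 2ⁿ. Then the generators of the two classes are jointly independent; concretely, the 4ⁿ products U·V with U ∈ Cᵢ ∪ {1} and V ∈ Cⱼ ∪ {1} (where 1 is the identity matrix) are pairwise distinct up to phase, and hence every n-qubit Pauli operator is equal up to phase to exactly one such product. -/

import Mathlib

open Matrix

noncomputable section

/-- Matrices on the Hilbert space of `n` qubits, with rows and columns indexed by
bit strings `Fin n → Fin 2`. -/
abbrev QMat (n : ℕ) := Matrix (Fin n → Fin 2) (Fin n → Fin 2) ℂ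

/-- The single-qubit identity. -/
def pI : Matrix (Fin 2) (Fin 2) ℂ := 1

/-- The single-qubit Pauli X. -/
def pX : Matrix (Fin 2) (Fin 2) ℂ := !![0, 1; 1, 0]

/-- The single-qubit Pauli Y. -/
def pY : Matrix (Fin 2) (Fin 2) ℂ := !![0, -Complex.I; Complex.I, 0]

/-- The single-qubit Pauli Z. -/
def pZ : Matrix (Fin 2) (Fin 2) ℂ := !![1, 0; 0, -1]

/-- The `n`-fold Kronecker product `W 0 ⊗ ⋯ ⊗ W (n-1)`, realized on indices
`Fin n → Fin 2`. -/
def kron (n : ℕ) (W : Fin n → Matrix (Fin 2) (Fin 2) ℂ) : QMat n :=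
  fun v w => ∏ j, W j (v j) (w j)

/-- `M` is an `n`-qubit Pauli operator: an `n`-fold Kronecker product of matrices
from `{I₂, X, Y, Z}`. -/
def IsPauliOp (n : ℕ) (M : QMat n) : Prop :=
  ∃ W : Fin n → Matrix (Fin 2) (Fin 2) ℂ,
    (∀ j, W j = pI ∨ W j = pX ∨ W j = pY ∨ W j = pZ) ∧ M = kron n W

/-- Two matrices are equal up to phase if one is a nonzero scalar multiple of the other. -/
def PhaseEq {m : Type*} (A B : Matrix m m ℂ) : Prop := ∃ c : ℂ, c ≠ 0 ∧ A = c • B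

/-- A maximal commuting Pauli class in dimension `d = 2 ^ n`: a set of `d - 1`
pairwise commuting non-identity `n`-qubit Pauli operators, pairwise distinct up to phase. -/
def IsMaxClass (n : ℕ) (C : Set (QMat n)) : Prop :=
  C.Finite ∧ C.ncard = 2 ^ n - 1 ∧
  (∀ U ∈ C, IsPauliOp n U ∧ U ≠ 1) ∧
  (∀ U ∈ C, ∀ V ∈ C, U * V = V * U) ∧
  (∀ U ∈ C, ∀ V ∈ C, U ≠ V → ¬ PhaseEq U V)

/-- Two classes are disjoint if no member of one is equal up to phase to a member of the other. -/
def ClassDisjoint {n : ℕ} (C D : Set (QMat n)) : Prop :=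
  ∀ U ∈ C, ∀ V ∈ D, ¬ PhaseEq U V

/-- Two classes are equal up to phase (as sets of operators). -/
def ClassPhaseEq {n : ℕ} (C D : Set (QMat n)) : Prop :=
  (∀ U ∈ C, ∃ V ∈ D, PhaseEq U V) ∧ (∀ V ∈ D, ∃ U ∈ C, PhaseEq U V)

/-- The standard Hermitian inner product on `ι → ℂ` (conjugate-linear in the first slot). -/
def cinner {ι : Type*} [Fintype ι] (x y : ι → ℂ) : ℂ :=
  ∑ k, (starRingEnd ℂ) (x k) * y k

-- ===== auxiliary development =====

/-- Conversion `Fin 2 → ZMod 2` (definitionally the identity). -/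
def zf (x : Fin 2) : ZMod 2 := x

/-- Conversion `ZMod 2 → Fin 2` (definitionally the identity). -/
def fz (x : ZMod 2) : Fin 2 := x

lemma zf_fz (x : ZMod 2) : zf (fz x) = x := rfl
lemma zf_zero : zf 0 = 0 := rfl

/-- The sign character of `ZMod 2`. -/
def chi : ZMod 2 → ℂ := fun t => if t = 0 then 1 else -1

lemma chi_zero : chi 0 = 1 := by simp [chi]
lemma zmod2_cases (t : ZMod 2) : t = 0 ∨ t = 1 := by revert t; decide
lemma zf_one : zf 1 = 1 := rfl
lemma chi_ne_zero (t : ZMod 2) : chi t ≠ 0 := by rcases zmod2_cases t with rfl | rfl <;> simp [chi]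
lemma chi_add (s t : ZMod 2) : chi (s + t) = chi s * chi t := by
  rcases zmod2_cases s with rfl | rfl <;> rcases zmod2_cases t with rfl | rfl <;> norm_num [chi] <;> rfl
lemma chi_inj {s t : ZMod 2} (h : chi s = chi t) : s = t := by
  revert h; rcases zmod2_cases s with rfl | rfl <;> rcases zmod2_cases t with rfl | rfl <;> norm_num [chi]

lemma chi_sum {ι : Type*} (s : Finset ι) (f : ι → ZMod 2) :
    chi (∑ j ∈ s, f j) = ∏ j ∈ s, chi (f j) := by
  induction s using Finset.cons_induction with
  | empty => simp [chi_zero]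
  | cons a s ha ih => rw [Finset.sum_cons, Finset.prod_cons, chi_add, ih]

/-- The Pauli matrix with symplectic label `(a, b)`, namely `X^a Z^b`. -/
def sigma (a b : ZMod 2) : Matrix (Fin 2) (Fin 2) ℂ :=
  fun x y => if zf y = zf x + a then chi (b * zf y) else 0

set_option maxHeartbeats 1000000 in
lemma sigma_mul (a b a' b' : ZMod 2) :
    sigma a b * sigma a' b' = chi (b * a') • sigma (a + a') (b + b') := by
  ext x y
  rcases zmod2_cases a with rfl | rfl <;> rcases zmod2_cases b with rfl | rfl <;> rcases zmod2_cases a' with rfl | rfl <;> rcases zmod2_cases b' with rfl | rfl <;> fin_cases x <;> fin_cases y <;>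
    simp [sigma, chi, zf_zero, zf_one, Matrix.mul_apply, Fin.sum_univ_two, show (1+1:ZMod 2)=0 from rfl]

lemma sigma_zero : sigma 0 0 = 1 := by
  ext x y
  fin_cases x <;> fin_cases y <;> simp [sigma, chi, zf, Matrix.one_apply] <;> rfl

lemma pI_eq : pI = (1 : ℂ) • sigma 0 0 := by rw [sigma_zero, one_smul]; rfl
lemma pX_eq : pX = (1 : ℂ) • sigma 1 0 := by
  ext x y; fin_cases x <;> fin_cases y <;> simp [pX, sigma, chi, zf] <;> rfl
lemma pZ_eq : pZ = (1 : ℂ) • sigma 0 1 := by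
  ext x y; fin_cases x <;> fin_cases y <;> norm_num [pZ, sigma, chi, zf] <;> rfl
lemma pY_eq : pY = Complex.I • sigma 1 1 := by
  ext x y; fin_cases x <;> fin_cases y <;> norm_num [pY, sigma, chi, zf_zero, zf_one] <;> decide

lemma kron_mul (n : ℕ) (W W' : Fin n → Matrix (Fin 2) (Fin 2) ℂ) :
    kron n W * kron n W' = kron n (fun j => W j * W' j) := by
  ext v w
  rw [Matrix.mul_apply]
  have : ∀ u : Fin n → Fin 2, (∏ j, W j (v j) (u j)) * (∏ j, W' j (u j) (w j))
      = ∏ j, (W j (v j) (u j) * W' j (u j) (w j)) := fun u => (Finset.prod_mul_distrib).symm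
  simp only [kron, this]
  conv_rhs => simp only [Matrix.mul_apply]
  rw [Finset.prod_univ_sum, Fintype.piFinset_univ]

lemma kron_smul (n : ℕ) (c : Fin n → ℂ) (W : Fin n → Matrix (Fin 2) (Fin 2) ℂ) :
    kron n (fun j => c j • W j) = (∏ j, c j) • kron n W := by
  ext v w
  simp [kron, Finset.prod_mul_distrib, Matrix.smul_apply, smul_eq_mul]

lemma kron_one (n : ℕ) : kron n (fun _ => (1 : Matrix (Fin 2) (Fin 2) ℂ)) = 1 := by
  ext v w
  by_cases h : v = w
  · subst h; simp [kron, Matrix.one_apply]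
  · rw [kron, Matrix.one_apply_ne h]
    obtain ⟨j, hj⟩ := Function.ne_iff.mp h
    exact Finset.prod_eq_zero (Finset.mem_univ j) (Matrix.one_apply_ne hj)

/-- The label space: one pair `(a, b) ∈ (ZMod 2)²` per qubit. -/
abbrev Lab (n : ℕ) := Fin n → ZMod 2 × ZMod 2

/-- The standard Pauli operator with label `p`. -/
def Ksig (n : ℕ) (p : Lab n) : QMat n := kron n (fun j => sigma (p j).1 (p j).2)

lemma Ksig_apply (n : ℕ) (p : Lab n) (v w : Fin n → Fin 2) :
    Ksig n p v w = if ∀ j, zf (w j) = zf (v j) + (p j).1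
      then chi (∑ j, (p j).2 * zf (w j)) else 0 := by
  rw [Ksig, kron]
  by_cases h : ∀ j, zf (w j) = zf (v j) + (p j).1
  · rw [if_pos h, chi_sum]
    exact Finset.prod_congr rfl fun j _ => by rw [sigma, if_pos (h j)]
  · rw [if_neg h]
    push_neg at h
    obtain ⟨j, hj⟩ := h
    exact Finset.prod_eq_zero (Finset.mem_univ j) (by rw [sigma, if_neg hj])

lemma Ksig_zero (n : ℕ) : Ksig n 0 = 1 := by
  rw [Ksig]
  have : (fun j : Fin n => sigma ((0 : Lab n) j).1 ((0 : Lab n) j).2)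
      = fun _ => (1 : Matrix (Fin 2) (Fin 2) ℂ) := by
    funext j; simpa using sigma_zero
  rw [this, kron_one]

lemma Ksig_mul (n : ℕ) (p q : Lab n) :
    Ksig n p * Ksig n q = chi (∑ j, (p j).2 * (q j).1) • Ksig n (p + q) := by
  rw [Ksig, Ksig, kron_mul]
  have : (fun j => sigma (p j).1 (p j).2 * sigma (q j).1 (q j).2)
      = fun j => chi ((p j).2 * (q j).1) • sigma (((p + q) j).1) (((p + q) j).2) := by
    funext j; rw [sigma_mul]; rfl
  rw [this, kron_smul, chi_sum, Ksig]

lemma Ksig_ne_zero (n : ℕ) (p : Lab n) : Ksig n p ≠ 0 := by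
  intro h
  have h2 := congrFun (congrFun h (fun _ => fz 0)) (fun j => fz ((p j).1))
  rw [Ksig_apply] at h2
  rw [if_pos (fun j => by rw [zf_fz, zf_fz, zero_add])] at h2
  exact chi_ne_zero _ h2

lemma smul_cancel_of_ne_zero {n : ℕ} {c d : ℂ} {M : QMat n} (hM : M ≠ 0)
    (h : c • M = d • M) : c = d := by
  by_contra hcd
  apply hM
  have : (c - d) • M = 0 := by rw [sub_smul, h, sub_self]
  rcases smul_eq_zero.mp this with h' | h'
  · exact absurd (sub_eq_zero.mp h') hcd
  · exact absurd h' hM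

lemma Ksig_phase_inj (n : ℕ) {p q : Lab n} (h : PhaseEq (Ksig n p) (Ksig n q)) : p = q := by
  obtain ⟨c, hc, h⟩ := h
  -- first components agree
  have ha : ∀ j, (p j).1 = (q j).1 := by
    intro j0
    by_contra hj0
    have h2 := congrFun (congrFun h (fun _ => fz 0)) (fun j => fz ((p j).1))
    rw [Matrix.smul_apply, Ksig_apply, Ksig_apply,
      if_pos (fun j => by rw [zf_fz, zf_fz, zero_add]),
      if_neg (fun hall => hj0 ((by simpa [zf_fz, zero_add] using (hall j0).symm : (q j0).1 = (p j0).1)).symm)] at h2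
    rw [smul_zero] at h2
    exact chi_ne_zero _ h2
  -- key entry identity
  have key : ∀ v : Fin n → Fin 2,
      chi (∑ j, (p j).2 * zf (v j)) * chi (∑ j, (p j).2 * (p j).1)
        = c * (chi (∑ j, (q j).2 * zf (v j)) * chi (∑ j, (q j).2 * (p j).1)) := by
    intro v
    have h2 := congrFun (congrFun h v) (fun j => fz (zf (v j) + (p j).1))
    rw [Matrix.smul_apply, Ksig_apply, Ksig_apply, if_pos (fun j => by rw [zf_fz]),
      if_pos (fun j => by rw [zf_fz, ha j])] at h2
    have e1 : ∀ r : Lab n, (∑ j, (r j).2 * zf ((fun j => fz (zf (v j) + (p j).1)) j))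
        = (∑ j, (r j).2 * zf (v j)) + ∑ j, (r j).2 * (p j).1 := by
      intro r
      rw [← Finset.sum_add_distrib]
      exact Finset.sum_congr rfl fun j _ => by rw [zf_fz, mul_add]
    rw [e1, e1, chi_add, chi_add] at h2
    simpa [smul_eq_mul] using h2
  have key0 := key (fun _ => fz 0)
  simp only [zf_fz, mul_zero, Finset.sum_const_zero, chi_zero, one_mul] at key0
  -- cancel the constant
  -- cancel the constant, deduce second components agree
  have hb : ∀ j0, (p j0).2 = (q j0).2 := by
    intro j0
    set v : Fin n → Fin 2 := fun j => if j = j0 then fz 1 else fz 0 with hv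
    have e : ∀ r : Lab n, (∑ j, (r j).2 * zf (v j)) = (r j0).2 := by
      intro r
      rw [Finset.sum_eq_single j0]
      · simp [hv, zf_fz]
      · intro b _ hb; simp [hv, hb, zf_fz, zf_zero]
      · simp
    have hk := key v
    rw [key0, show c * (chi (∑ j, (q j).2 * zf (v j)) * chi (∑ j, (q j).2 * (p j).1))
        = chi (∑ j, (q j).2 * zf (v j)) * (c * chi (∑ j, (q j).2 * (p j).1)) from by ring] at hk
    have hcan := mul_right_cancel₀ (mul_ne_zero hc (chi_ne_zero _)) hk
    rw [e p, e q] at hcan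
    exact chi_inj hcan
  funext j
  exact Prod.ext (ha j) (hb j)

-- ===== labels of Pauli operators =====

lemma pauli_single {W : Matrix (Fin 2) (Fin 2) ℂ}
    (h : W = pI ∨ W = pX ∨ W = pY ∨ W = pZ) :
    ∃ (a b : ZMod 2) (c : ℂ), c ≠ 0 ∧ W = c • sigma a b ∧ ((a, b) = (0, 0) → W = pI) := by
  rcases h with h | h | h | h
  · exact ⟨0, 0, 1, one_ne_zero, by rw [h, pI_eq], fun _ => h⟩
  · refine ⟨1, 0, 1, one_ne_zero, by rw [h, pX_eq], fun hc => ?_⟩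
    exact absurd (congrArg Prod.fst hc) (by decide)
  · refine ⟨1, 1, Complex.I, Complex.I_ne_zero, by rw [h, pY_eq], fun hc => ?_⟩
    exact absurd (congrArg Prod.fst hc) (by decide)
  · refine ⟨0, 1, 1, one_ne_zero, by rw [h, pZ_eq], fun hc => ?_⟩
    exact absurd (congrArg Prod.snd hc) (by decide)

lemma exists_label {n : ℕ} {M : QMat n} (h : IsPauliOp n M) :
    ∃ p : Lab n, PhaseEq M (Ksig n p) ∧ (p = 0 → M = 1) := by
  obtain ⟨W, hW, hM⟩ := h
  choose a b c hc hWc h0 using fun j => pauli_single (hW j)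
  refine ⟨fun j => (a j, b j), ⟨∏ j, c j, Finset.prod_ne_zero_iff.mpr fun j _ => hc j, ?_⟩, ?_⟩
  · rw [hM, Ksig]
    rw [← kron_smul]
    exact congrArg (kron n) (funext fun j => hWc j)
  · intro hp
    have : ∀ j, W j = pI := by
      intro j
      have := congrFun hp j
      exact h0 j (by simpa using this)
    rw [hM, show W = fun _ => pI from funext this]
    exact kron_one n

-- ===== PhaseEq utilities =====

lemma PhaseEq.refl {m : Type*} (A : Matrix m m ℂ) : PhaseEq A A :=
  ⟨1, one_ne_zero, (one_smul ℂ A).symm⟩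

lemma PhaseEq.symm' {m : Type*} {A B : Matrix m m ℂ} (h : PhaseEq A B) : PhaseEq B A := by
  obtain ⟨c, hc, h⟩ := h
  exact ⟨c⁻¹, inv_ne_zero hc, by rw [h, smul_smul, inv_mul_cancel₀ hc, one_smul]⟩

lemma PhaseEq.trans' {m : Type*} {A B C : Matrix m m ℂ} (h1 : PhaseEq A B)
    (h2 : PhaseEq B C) : PhaseEq A C := by
  obtain ⟨c, hc, h1⟩ := h1
  obtain ⟨d, hd, h2⟩ := h2
  exact ⟨c * d, mul_ne_zero hc hd, by rw [h1, h2, smul_smul]⟩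

lemma PhaseEq.mul' {m : Type*} [Fintype m] {A B A' B' : Matrix m m ℂ}
    (h : PhaseEq A B) (h' : PhaseEq A' B') : PhaseEq (A * A') (B * B') := by
  obtain ⟨c, hc, h⟩ := h
  obtain ⟨d, hd, h'⟩ := h'
  exact ⟨c * d, mul_ne_zero hc hd, by
    rw [h, h', Matrix.smul_mul, Matrix.mul_smul, smul_smul]⟩

-- ===== the symplectic form =====

def spp {n : ℕ} (p q : Lab n) : ZMod 2 := ∑ j, (p j).2 * (q j).1

lemma spp_add_left {n : ℕ} (p p' q : Lab n) : spp (p + p') q = spp p q + spp p' q := by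
  simp only [spp, Pi.add_apply, Prod.snd_add]
  rw [← Finset.sum_add_distrib]
  exact Finset.sum_congr rfl fun j _ => by ring

lemma spp_add_right {n : ℕ} (p q q' : Lab n) : spp p (q + q') = spp p q + spp p q' := by
  simp only [spp, Pi.add_apply, Prod.fst_add]
  rw [← Finset.sum_add_distrib]
  exact Finset.sum_congr rfl fun j _ => by ring

lemma spp_smul_left {n : ℕ} (r : ZMod 2) (p q : Lab n) : spp (r • p) q = r * spp p q := by
  simp only [spp, Pi.smul_apply, Prod.smul_snd, smul_eq_mul]
  rw [Finset.mul_sum]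
  exact Finset.sum_congr rfl fun j _ => by ring

lemma spp_smul_right {n : ℕ} (r : ZMod 2) (p q : Lab n) : spp p (r • q) = r * spp p q := by
  simp only [spp, Pi.smul_apply, Prod.smul_fst, smul_eq_mul]
  rw [Finset.mul_sum]
  exact Finset.sum_congr rfl fun j _ => by ring

/-- The symplectic form on labels. -/
def Bform (n : ℕ) : LinearMap.BilinForm (ZMod 2) (Lab n) :=
  LinearMap.mk₂ (ZMod 2) (fun p q => spp p q + spp q p)
    (fun p p' q => by
      show spp (p + p') q + spp q (p + p') = (spp p q + spp q p) + (spp p' q + spp q p')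
      rw [spp_add_left, spp_add_right]; ring)
    (fun r p q => by
      show spp (r • p) q + spp q (r • p) = r • (spp p q + spp q p)
      rw [spp_smul_left, spp_smul_right, smul_eq_mul]; ring)
    (fun p q q' => by
      show spp p (q + q') + spp (q + q') p = (spp p q + spp q p) + (spp p q' + spp q' p)
      rw [spp_add_right, spp_add_left]; ring)
    (fun r p q => by
      show spp p (r • q) + spp (r • q) p = r • (spp p q + spp q p)
      rw [spp_smul_right, spp_smul_left, smul_eq_mul]; ring)

lemma Bform_apply {n : ℕ} (p q : Lab n) : Bform n p q = spp p q + spp q p := rfl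

lemma Bform_isRefl (n : ℕ) : (Bform n).IsRefl := by
  intro p q h
  rw [Bform_apply] at h ⊢
  rw [add_comm] at h
  exact h

/-- A label supported at one coordinate. -/
lemma spp_single {n : ℕ} (p : Lab n) (j0 : Fin n) (x : ZMod 2 × ZMod 2) :
    spp p (Pi.single j0 x) = (p j0).2 * x.1 := by
  rw [spp, Finset.sum_eq_single j0]
  · rw [Pi.single_eq_same]
  · intro b _ hb
    rw [Pi.single_eq_of_ne hb]
    simp
  · simp

lemma spp_single' {n : ℕ} (p : Lab n) (j0 : Fin n) (x : ZMod 2 × ZMod 2) :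
    spp (Pi.single j0 x) p = x.2 * (p j0).1 := by
  rw [spp, Finset.sum_eq_single j0]
  · rw [Pi.single_eq_same]
  · intro b _ hb
    rw [Pi.single_eq_of_ne hb]
    simp
  · simp

lemma Bform_nondegenerate (n : ℕ) : (Bform n).Nondegenerate := by
  apply (Bform_isRefl n).nondegenerate_iff_separatingLeft.mpr
  intro p hp
  funext j0
  have h1 := hp (Pi.single j0 (1, 0))
  have h2 := hp (Pi.single j0 (0, 1))
  rw [Bform_apply, spp_single, spp_single'] at h1 h2
  simp only [mul_one, mul_zero, zero_mul, one_mul, add_zero, zero_add] at h1 h2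
  have : (0 : ZMod 2 × ZMod 2) = (0, 0) := rfl
  rw [Pi.zero_apply, this]
  exact Prod.ext h2 h1

lemma Bform_self (n : ℕ) (p : Lab n) : Bform n p p = 0 := by
  rw [Bform_apply, add_comm, CharTwo.add_self_eq_zero]

/-- If two Pauli operators with labels `p`, `q` commute, the symplectic form vanishes. -/
lemma commute_Bform {n : ℕ} {p q : Lab n} (h : Ksig n p * Ksig n q = Ksig n q * Ksig n p) :
    Bform n p q = 0 := by
  rw [Ksig_mul, Ksig_mul, add_comm q p] at h
  have := smul_cancel_of_ne_zero (Ksig_ne_zero n (p + q)) h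
  have hpq : spp p q = spp q p := chi_inj this
  rw [Bform_apply, hpq, CharTwo.add_self_eq_zero]

-- dimension of the label space
lemma finrank_Lab (n : ℕ) : Module.finrank (ZMod 2) (Lab n) = 2 * n := by
  rw [Module.finrank_pi_fintype]
  simp [Module.finrank_prod, Module.finrank_self]
  ring

lemma finrank_span_isotropic {n : ℕ} (S : Set (Lab n))
    (hS : ∀ p ∈ S, ∀ q ∈ S, Bform n p q = 0) :
    Module.finrank (ZMod 2) (Submodule.span (ZMod 2) S) ≤ n := by
  set L := Submodule.span (ZMod 2) S with hL
  have step1 : ∀ q ∈ S, ∀ p ∈ L, Bform n p q = 0 := by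
    intro q hq p hp
    induction hp using Submodule.span_induction with
    | mem x hx => exact hS x hx q hq
    | zero => simp
    | add x y _ _ h1 h2 => rw [map_add, LinearMap.add_apply, h1, h2, add_zero]
    | smul r x _ h1 => rw [_root_.map_smul, LinearMap.smul_apply, h1, smul_zero]
  have hiso : ∀ p ∈ L, ∀ q ∈ L, Bform n p q = 0 := by
    intro p hp q hq
    induction hq using Submodule.span_induction with
    | mem y hy => exact step1 y hy p hp
    | zero => simp
    | add x y _ _ h1 h2 => rw [_root_.map_add, h1, h2, add_zero]
    | smul r x _ h1 => rw [_root_.map_smul, h1, smul_zero]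
  have hle : L ≤ (Bform n).orthogonal L := by
    intro q hq
    intro x hx
    exact hiso x hx q hq
  have h1 : Module.finrank (ZMod 2) L ≤ Module.finrank (ZMod 2) ((Bform n).orthogonal L) :=
    Submodule.finrank_mono hle
  rw [LinearMap.BilinForm.finrank_orthogonal (Bform_nondegenerate n)] at h1
  have h2 := Submodule.finrank_le L
  rw [finrank_Lab] at h1 h2
  omega

-- cardinality of a submodule of the label space
lemma ncard_submodule {n : ℕ} (L : Submodule (ZMod 2) (Lab n)) :
    (L : Set (Lab n)).ncard = 2 ^ Module.finrank (ZMod 2) L := by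
  have e : Nat.card L = 2 ^ Module.finrank (ZMod 2) L := by
    letI : Fintype L := Fintype.ofFinite L
    rw [Nat.card_eq_fintype_card, Module.card_eq_pow_finrank (K := ZMod 2) (V := L), ZMod.card]
  rw [← e]
  exact (Nat.card_coe_set_eq _).symm

-- every Pauli operator has a unique label
lemma label_unique {n : ℕ} {M : QMat n} {p q : Lab n}
    (hp : PhaseEq M (Ksig n p)) (hq : PhaseEq M (Ksig n q)) : p = q :=
  Ksig_phase_inj n (hp.symm'.trans' hq)


-- ===== the canonical label of a Pauli operator =====

open Classical in
def label {n : ℕ} (U : QMat n) : Lab n :=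
  if h : ∃ p : Lab n, PhaseEq U (Ksig n p) then h.choose else 0

lemma label_spec {n : ℕ} {U : QMat n} {p : Lab n} (h : PhaseEq U (Ksig n p)) :
    label U = p := by
  have h' : ∃ q : Lab n, PhaseEq U (Ksig n q) := ⟨p, h⟩
  classical
  rw [label, dif_pos h']
  exact label_unique h'.choose_spec h

lemma label_one (n : ℕ) : label (1 : QMat n) = 0 :=
  label_spec (by rw [Ksig_zero]; exact PhaseEq.refl _)

lemma label_phase {n : ℕ} {U : QMat n} (h : IsPauliOp n U) :
    PhaseEq U (Ksig n (label U)) := by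
  obtain ⟨p, hp, _⟩ := exists_label h
  rw [label_spec hp]; exact hp

lemma label_ne_zero {n : ℕ} {U : QMat n} (h : IsPauliOp n U) (hU : U ≠ 1) :
    label U ≠ 0 := by
  obtain ⟨p, hp, h0⟩ := exists_label h
  rw [label_spec hp]
  exact fun hz => hU (h0 hz)

lemma two_nsmul_lab {n : ℕ} (x : Lab n) : x + x = 0 := by
  have : (2 : ZMod 2) • x = 0 := by
    have : (2 : ZMod 2) = 0 := rfl
    rw [this, zero_smul]
  simpa [two_smul] using this

-- ===== a maximal class spans a Lagrangian =====

lemma class_span {n : ℕ} {C : Set (QMat n)} (hC : IsMaxClass n C) :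
    ∃ L : Submodule (ZMod 2) (Lab n),
      Module.finrank (ZMod 2) L = n ∧
      (∀ x : Lab n, x ∈ L ↔ (x = 0 ∨ ∃ U ∈ C, label U = x)) := by
  obtain ⟨hfin, hcard, hmem, hcomm, hdist⟩ := hC
  set S : Set (Lab n) := label '' C with hSdef
  set L : Submodule (ZMod 2) (Lab n) := Submodule.span (ZMod 2) S with hLdef
  have hinj : Set.InjOn (label (n := n)) C := by
    intro U hU V hV hUV
    by_contra hne
    refine hdist U hU V hV hne ?_
    exact (label_phase (hmem U hU).1).trans'
      (hUV ▸ (label_phase (hmem V hV).1)).symm'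
  -- pairwise orthogonality
  have horth : ∀ p ∈ S, ∀ q ∈ S, Bform n p q = 0 := by
    rintro p ⟨U, hU, rfl⟩ q ⟨V, hV, rfl⟩
    obtain ⟨c, hc, hUc⟩ := label_phase (hmem U hU).1
    obtain ⟨d, hd, hVd⟩ := label_phase (hmem V hV).1
    have hcm := hcomm U hU V hV
    rw [hUc, hVd] at hcm
    rw [Matrix.smul_mul, Matrix.mul_smul, Matrix.smul_mul, Matrix.mul_smul,
      smul_smul, smul_smul, mul_comm d c] at hcm
    have := smul_right_injective (QMat n) (mul_ne_zero hc hd) hcm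
    exact commute_Bform this
  have hfinrank_le : Module.finrank (ZMod 2) L ≤ n := finrank_span_isotropic S horth
  -- cardinalities
  have hSfin : S.Finite := hfin.image _
  have h0S : (0 : Lab n) ∉ S := by
    rintro ⟨U, hU, hU0⟩
    exact label_ne_zero (hmem U hU).1 (hmem U hU).2 hU0
  have hScard : S.ncard = 2 ^ n - 1 := by
    rw [hSdef, Set.ncard_image_of_injOn hinj, hcard]
  have hins : (insert (0 : Lab n) S).ncard = 2 ^ n := by
    rw [Set.ncard_insert_of_notMem h0S hSfin, hScard]
    have : 1 ≤ 2 ^ n := Nat.one_le_two_pow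
    omega
  have hsub : insert (0 : Lab n) S ⊆ (L : Set (Lab n)) := by
    rintro x (rfl | hx)
    · exact L.zero_mem
    · exact Submodule.subset_span hx
  have hLcard : (L : Set (Lab n)).ncard = 2 ^ Module.finrank (ZMod 2) L :=
    ncard_submodule L
  have heqset : insert (0 : Lab n) S = (L : Set (Lab n)) := by
    refine Set.eq_of_subset_of_ncard_le hsub ?_ (Set.toFinite _)
    rw [hLcard, hins]
    exact Nat.pow_le_pow_right (by norm_num) hfinrank_le
  have hfr : Module.finrank (ZMod 2) L = n := by
    have : (2 : ℕ) ^ Module.finrank (ZMod 2) L = 2 ^ n := by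
      rw [← hLcard, ← heqset, hins]
    exact Nat.pow_right_injective (le_refl 2) this
  refine ⟨L, hfr, fun x => ?_⟩
  constructor
  · intro hx
    have : x ∈ insert (0 : Lab n) S := heqset ▸ hx
    rcases this with rfl | hx'
    · exact Or.inl rfl
    · obtain ⟨U, hU, rfl⟩ := hx'
      exact Or.inr ⟨U, hU, rfl⟩
  · rintro (rfl | ⟨U, hU, rfl⟩)
    · exact L.zero_mem
    · exact Submodule.subset_span ⟨U, hU, rfl⟩

/-- For two disjoint maximal commuting Pauli classes `Ci`, `Cj` in `d = 2 ^ n`,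
the `4 ^ n` products `U * V` with `U ∈ Ci ∪ {1}` and `V ∈ Cj ∪ {1}` are pairwise distinct
up to phase, and every `n`-qubit Pauli operator is equal up to phase to such a product. -/
theorem two_classes_generate (n : ℕ) (Ci Cj : Set (QMat n))
    (hi : IsMaxClass n Ci) (hj : IsMaxClass n Cj) (hd : ClassDisjoint Ci Cj) :
    (∀ U ∈ insert (1 : QMat n) Ci, ∀ V ∈ insert (1 : QMat n) Cj,
      ∀ U' ∈ insert (1 : QMat n) Ci, ∀ V' ∈ insert (1 : QMat n) Cj,
        PhaseEq (U * V) (U' * V') → U = U' ∧ V = V') ∧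
    (∀ M : QMat n, IsPauliOp n M →
      ∃ U ∈ insert (1 : QMat n) Ci, ∃ V ∈ insert (1 : QMat n) Cj, PhaseEq M (U * V)) := by
  obtain ⟨Li, hri, hLi⟩ := class_span hi
  obtain ⟨Lj, hrj, hLj⟩ := class_span hj
  -- trivial intersection
  have hinf : Li ⊓ Lj = ⊥ := by
    rw [eq_bot_iff]
    rintro x ⟨hxi, hxj⟩
    rcases (hLi x).mp hxi with rfl | ⟨U, hU, hUx⟩
    · exact Submodule.zero_mem ⊥
    rcases (hLj x).mp hxj with rfl | ⟨V, hV, hVx⟩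
    · exact Submodule.zero_mem ⊥
    exfalso
    refine hd U hU V hV ?_
    exact (label_phase (hi.2.2.1 U hU).1).trans'
      (by rw [hUx, ← hVx]; exact (label_phase (hj.2.2.1 V hV).1).symm')
  -- full sum
  have hsup : Li ⊔ Lj = ⊤ := by
    apply Submodule.eq_top_of_finrank_eq
    have h1 := Submodule.finrank_sup_add_finrank_inf_eq Li Lj
    rw [hinf, finrank_bot, add_zero, hri, hrj] at h1
    rw [h1, finrank_Lab]
    ring
  -- phases of members
  have hphase_i : ∀ U ∈ insert (1 : QMat n) Ci,
      PhaseEq U (Ksig n (label U)) ∧ label U ∈ Li := by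
    rintro U (rfl | hU)
    · rw [label_one]
      exact ⟨by rw [Ksig_zero]; exact PhaseEq.refl _, Li.zero_mem⟩
    · exact ⟨label_phase (hi.2.2.1 U hU).1, (hLi _).mpr (Or.inr ⟨U, hU, rfl⟩)⟩
  have hphase_j : ∀ V ∈ insert (1 : QMat n) Cj,
      PhaseEq V (Ksig n (label V)) ∧ label V ∈ Lj := by
    rintro V (rfl | hV)
    · rw [label_one]
      exact ⟨by rw [Ksig_zero]; exact PhaseEq.refl _, Lj.zero_mem⟩
    · exact ⟨label_phase (hj.2.2.1 V hV).1, (hLj _).mpr (Or.inr ⟨V, hV, rfl⟩)⟩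
  -- injectivity of `label` on each augmented class
  have labinj : ∀ (C : Set (QMat n)), IsMaxClass n C →
      ∀ U ∈ insert (1 : QMat n) C, ∀ U' ∈ insert (1 : QMat n) C,
        label U = label U' → U = U' := by
    rintro C hC U (rfl | hU) U' (rfl | hU') h
    · rfl
    · exact absurd ((label_one n) ▸ h.symm)
        (label_ne_zero (hC.2.2.1 U' hU').1 (hC.2.2.1 U' hU').2)
    · exact absurd ((label_one n) ▸ h)
        (label_ne_zero (hC.2.2.1 U hU).1 (hC.2.2.1 U hU).2)
    · by_contra hne
      refine hC.2.2.2.2 U hU U' hU' hne ?_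
      exact (label_phase (hC.2.2.1 U hU).1).trans'
        (h ▸ (label_phase (hC.2.2.1 U' hU').1)).symm'
  constructor
  · -- uniqueness
    intro U hU V hV U' hU' V' hV' hph
    obtain ⟨hpU, hmU⟩ := hphase_i U hU
    obtain ⟨hpV, hmV⟩ := hphase_j V hV
    obtain ⟨hpU', hmU'⟩ := hphase_i U' hU'
    obtain ⟨hpV', hmV'⟩ := hphase_j V' hV'
    have key : PhaseEq (Ksig n (label U + label V)) (Ksig n (label U' + label V')) := by
      have e1 : PhaseEq (U * V) (Ksig n (label U + label V)) :=
        (hpU.mul' hpV).trans' ⟨_, chi_ne_zero _, Ksig_mul n _ _⟩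
      have e2 : PhaseEq (U' * V') (Ksig n (label U' + label V')) :=
        (hpU'.mul' hpV').trans' ⟨_, chi_ne_zero _, Ksig_mul n _ _⟩
      exact e1.symm'.trans' (hph.trans' e2)
    have heq : label U + label V = label U' + label V' := Ksig_phase_inj n key
    have hsub : label U - label U' = label V' - label V :=
      sub_eq_sub_iff_add_eq_add.mpr (heq.trans (add_comm _ _))
    have hmem : label U - label U' ∈ Li ⊓ Lj := by
      refine ⟨Li.sub_mem hmU hmU', ?_⟩
      rw [hsub]
      exact Lj.sub_mem hmV' hmV
    rw [hinf, Submodule.mem_bot, sub_eq_zero] at hmem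
    have hV'eq : label V' - label V = 0 := by rw [← hsub, hmem, sub_self]
    rw [sub_eq_zero] at hV'eq
    exact ⟨labinj Ci hi U hU U' hU' hmem, labinj Cj hj V hV V' hV' hV'eq.symm⟩
  · -- existence
    intro M hM
    have hp : PhaseEq M (Ksig n (label M)) := label_phase hM
    have : label M ∈ Li ⊔ Lj := by rw [hsup]; exact Submodule.mem_top
    obtain ⟨u, hu, v, hv, huv⟩ := Submodule.mem_sup.mp this
    -- pick the class members
    have hUex : ∃ U ∈ insert (1 : QMat n) Ci, PhaseEq U (Ksig n u) := by
      rcases (hLi u).mp hu with rfl | ⟨U, hU, hUu⟩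
      · exact ⟨1, Set.mem_insert _ _, by rw [Ksig_zero]; exact PhaseEq.refl _⟩
      · exact ⟨U, Set.mem_insert_of_mem _ hU, hUu ▸ label_phase (hi.2.2.1 U hU).1⟩
    have hVex : ∃ V ∈ insert (1 : QMat n) Cj, PhaseEq V (Ksig n v) := by
      rcases (hLj v).mp hv with rfl | ⟨V, hV, hVv⟩
      · exact ⟨1, Set.mem_insert _ _, by rw [Ksig_zero]; exact PhaseEq.refl _⟩
      · exact ⟨V, Set.mem_insert_of_mem _ hV, hVv ▸ label_phase (hj.2.2.1 V hV).1⟩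
    obtain ⟨U, hU, hpU⟩ := hUex
    obtain ⟨V, hV, hpV⟩ := hVex
    refine ⟨U, hU, V, hV, ?_⟩
    have e0 : PhaseEq (Ksig n u * Ksig n v) (Ksig n (u + v)) :=
      ⟨_, chi_ne_zero _, Ksig_mul n u v⟩
    have e1 : PhaseEq (Ksig n (label M)) (Ksig n u * Ksig n v) := by
      rw [← huv]
      exact e0.symm'
    exact (hp.trans' e1).trans' (hpU.mul' hpV).symm'

end
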